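/- Let L, a, b, c, d ∈ ℝ with 2b − a < (g+1)L, let t ∈ ℤ, and let T_n^s ∈ ℝ (n ∈ ℤ, s ∈ {t, t+1}) satisfy the quasi-periodicity T_{n+g+1}^s = T_n^s + an + bs + c. Define Q_n^t = T_{n−1}^t + T_n^{t+1} − T_{n−1}^{t+1} − T_n^t + d and W_n^t = L + T_{n−1}^{t+1} + T_{n+1}^t − T_n^t − T_n^{t+1} + d; define X_n^t = min_{l=0,…,g}[ lL + 2T_{n−l−1}^{t+1} + T_n^t + T_{n−1}^t − 2T_{n−1}^{t+1} − T_{n−l}^t − T_{n−l−1}^t ] and T_n^{t+2} = 2T_n^{t+1} − T_n^t + X_{n+1}^t; and define Q_n^{t+1}, W_n^{t+1} from (T^{t+1}, T^{t+2}) by the same formulas with t replaced by t+1. Then: (1) T_{n+g+1}^{t+2} = T_n^{t+2} + an + b(t+2) + c for all n ∈ ℤ; (2) (Q_0^t,…,Q_g^t,W_0^t,…,W_g^t) ∈ 𝒯; (3) applying the evolution map T to (Q_n^t, W_n^t)_{n=0,…,g} yields exactly (Q_n^{t+1}, W_n^{t+1})_{n=0,…,g}. -/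

import Mathlib

open Matrix Finset

noncomputable section

namespace TropToda

variable (g : ℕ)

/-- The summand `(1/2) m K mᵀ + m Zᵀ` in the definition of the tropical theta function. -/
def thetaTerm (K : Matrix (Fin g) (Fin g) ℝ) (m : Fin g → ℤ) (Z : Fin g → ℝ) : ℝ :=
  (1/2) * (Matrix.vecMul (fun i => (m i : ℝ)) K ⬝ᵥ fun i => (m i : ℝ))
    + (fun i => (m i : ℝ)) ⬝ᵥ Z

/-- The tropical Riemann theta function associated with `K`. -/
def theta (K : Matrix (Fin g) (Fin g) ℝ) (Z : Fin g → ℝ) : ℝ :=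
  sInf (Set.range fun m : Fin g → ℤ => thetaTerm g K m Z)

/-- The fundamental region `D_m`. -/
def Dset (K : Matrix (Fin g) (Fin g) ℝ) (m : Fin g → ℤ) : Set (Fin g → ℝ) :=
  {Z | theta g K Z = thetaTerm g K m Z}

/-- The generic condition on `C = (C_{-1}, C_0, …, C_g)`. -/
def Generic (C : ℤ → ℝ) : Prop :=
  C (-1) > 2 * C 0 ∧
  (∀ i : ℤ, 0 ≤ i → i ≤ (g : ℤ) - 2 → C i + C (i + 2) > 2 * C (i + 1)) ∧
  C ((g : ℤ) - 1) > 2 * C (g : ℤ)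

/-- `L = C_{-1} − 2(g+1) C_g`. -/
def Lc (C : ℤ → ℝ) : ℝ := C (-1) - 2 * (g + 1) * C (g : ℤ)

/-- `λ_0 = C_g`, `λ_i = C_{g−i} − C_{g−i+1}` for `1 ≤ i ≤ g`. -/
def lam (C : ℤ → ℝ) (i : ℕ) : ℝ :=
  if i = 0 then C (g : ℤ) else C ((g : ℤ) - i) - C ((g : ℤ) - i + 1)

/-- `p_0 = L`, `p_i = L − 2 ∑_{j=1}^g min(λ_i − λ_0, λ_j − λ_0)`. -/
def pc (C : ℤ → ℝ) (i : ℕ) : ℝ :=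
  if i = 0 then Lc g C
  else Lc g C - 2 * ∑ j ∈ Finset.Icc 1 g,
    min (lam g C i - lam g C 0) (lam g C j - lam g C 0)

/-- The tridiagonal period matrix `K` (0-based index `a` corresponds to the paper's `a+1`). -/
def Kmat (C : ℤ → ℝ) : Matrix (Fin g) (Fin g) ℝ := fun a b =>
  if a = b then
    pc g C (a : ℕ) + pc g C ((a : ℕ) + 1) + 2 * (lam g C ((a : ℕ) + 1) - lam g C (a : ℕ))
  else if (a : ℕ) + 1 = (b : ℕ) then -(pc g C ((a : ℕ) + 1))
  else if (b : ℕ) + 1 = (a : ℕ) then -(pc g C ((b : ℕ) + 1))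
  else 0

/-- The first standard basis (row) vector `e_1`. -/
def e1 : Fin g → ℝ := fun i => if (i : ℕ) = 0 then 1 else 0

/-- `λ⃗ = (λ_1 − λ_0, …, λ_g − λ_{g−1})`. -/
def lamvec (C : ℤ → ℝ) : Fin g → ℝ := fun i => lam g C ((i : ℕ) + 1) - lam g C (i : ℕ)

/-- `Z_n^t = Z_0 − nL e_1 + t λ⃗`. -/
def Zpt (C : ℤ → ℝ) (Z0 : Fin g → ℝ) (n t : ℤ) : Fin g → ℝ :=
  fun i => Z0 i - (n : ℝ) * Lc g C * e1 g i + (t : ℝ) * lamvec g C i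

/-- `T_n^t = Θ(Z_n^t)`. -/
def Tf (C : ℤ → ℝ) (Z0 : Fin g → ℝ) (n t : ℤ) : ℝ :=
  theta g (Kmat g C) (Zpt g C Z0 n t)

/-- `Q_n^t = T_{n−1}^t + T_n^{t+1} − T_{n−1}^{t+1} − T_n^t + C_g`. -/
def Qf (C : ℤ → ℝ) (Z0 : Fin g → ℝ) (n t : ℤ) : ℝ :=
  Tf g C Z0 (n - 1) t + Tf g C Z0 n (t + 1) - Tf g C Z0 (n - 1) (t + 1)
    - Tf g C Z0 n t + C (g : ℤ)

/-- `W_n^t = L + T_{n−1}^{t+1} + T_{n+1}^t − T_n^t − T_n^{t+1} + C_g`. -/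
def Wf (C : ℤ → ℝ) (Z0 : Fin g → ℝ) (n t : ℤ) : ℝ :=
  Lc g C + Tf g C Z0 (n - 1) (t + 1) + Tf g C Z0 (n + 1) t - Tf g C Z0 n t
    - Tf g C Z0 n (t + 1) + C (g : ℤ)

/-- `σ_t ∘ ι_t : ℝ^g → ℝ^{2(g+1)}`, recording `(Q_n^t, W_n^t)_{n ∈ ℤ/(g+1)ℤ}`. -/
def sigmaIota (C : ℤ → ℝ) (t : ℤ) (Z0 : Fin g → ℝ) :
    (ZMod (g + 1) → ℝ) × (ZMod (g + 1) → ℝ) :=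
  (fun n => Qf g C Z0 (n.val : ℤ) t, fun n => Wf g C Z0 (n.val : ℤ) t)

/-- The tridiagonal matrix `J` with `2` on the diagonal and `−1` off it. -/
def Jmat : Matrix (Fin g) (Fin g) ℝ := fun a b =>
  if a = b then 2
  else if (a : ℕ) + 1 = (b : ℕ) then -1
  else if (b : ℕ) + 1 = (a : ℕ) then -1
  else 0

/-- `X_n = min_{k=0,…,g} ∑_{l=1}^k (W_{n−l} − Q_{n−l})`, indices mod `g+1`. -/
def todaX (Q W : ZMod (g + 1) → ℝ) (n : ZMod (g + 1)) : ℝ :=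
  ⨅ k : Fin (g + 1), ∑ l ∈ Finset.Icc 1 (k : ℕ),
    (W (n - (l : ZMod (g + 1))) - Q (n - (l : ZMod (g + 1))))

/-- The ultra-discrete periodic Toda evolution map. -/
def todaMap (QW : (ZMod (g + 1) → ℝ) × (ZMod (g + 1) → ℝ)) :
    (ZMod (g + 1) → ℝ) × (ZMod (g + 1) → ℝ) :=
  (fun n => min (QW.2 n) (QW.1 n - todaX g QW.1 QW.2 n),
   fun n => QW.1 (n + 1) + QW.2 n - min (QW.2 n) (QW.1 n - todaX g QW.1 QW.2 n))

/-- `Z̃_n^t = Z_{n_0}^0 − (n − n_0)(L + δ) e_1 + t λ⃗`. -/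
def Ztil (C : ℤ → ℝ) (Z0 : Fin g → ℝ) (n0 : ℤ) (δ : ℝ) (n t : ℤ) : Fin g → ℝ :=
  fun i => Zpt g C Z0 n0 0 i - ((n : ℝ) - (n0 : ℝ)) * (Lc g C + δ) * e1 g i
    + (t : ℝ) * lamvec g C i

/-- The theta function `Θ̃` associated with `K̃ = K + δJ`. -/
def thetaTil (C : ℤ → ℝ) (δ : ℝ) (Z : Fin g → ℝ) : ℝ :=
  theta g (Kmat g C + δ • Jmat g) Z

/-- `Q̃_n`. -/
def Qtil (C : ℤ → ℝ) (Z0 : Fin g → ℝ) (n0 : ℤ) (δ : ℝ) (n : ℤ) : ℝ :=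
  thetaTil g C δ (Ztil g C Z0 n0 δ (n - 1) 0) + thetaTil g C δ (Ztil g C Z0 n0 δ n 1)
    - thetaTil g C δ (Ztil g C Z0 n0 δ (n - 1) 1) - thetaTil g C δ (Ztil g C Z0 n0 δ n 0)

/-- `W̃_n`. -/
def Wtil (C : ℤ → ℝ) (Z0 : Fin g → ℝ) (n0 : ℤ) (δ : ℝ) (n : ℤ) : ℝ :=
  (Lc g C + δ) + thetaTil g C δ (Ztil g C Z0 n0 δ (n - 1) 1)
    + thetaTil g C δ (Ztil g C Z0 n0 δ (n + 1) 0)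
    - thetaTil g C δ (Ztil g C Z0 n0 δ n 0) - thetaTil g C δ (Ztil g C Z0 n0 δ n 1)

end TropToda
/-- Auxiliary: the closed form of the partial sums `S_k(n) = ∑_{l=1}^k (W_{n-l} - Q_{n-l})`. -/
def bilinearSfun (L : ℝ) (Tt Tt1 : ℤ → ℝ) (n : ℤ) (k : ℕ) : ℝ :=
  (k : ℝ) * L + 2 * Tt1 (n - k - 1) + Tt n + Tt (n - 1)
    - (2 * Tt1 (n - 1) + Tt (n - k) + Tt (n - k - 1))

open TropToda in
/-- the bilinear formalism: quasi-periodicity of `T^{t+2}`, membership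
of `(Q^t, W^t)` in `𝒯`, and commutativity with the Toda evolution map. -/
theorem bilinear_commutes
    (g : ℕ) (hg : 0 < g) (L a b c d : ℝ) (hL : 2 * b - a < (g + 1) * L)
    (t : ℤ) (Tt Tt1 : ℤ → ℝ)
    (hpt : ∀ n : ℤ, Tt (n + g + 1) = Tt n + a * n + b * t + c)
    (hpt1 : ∀ n : ℤ, Tt1 (n + g + 1) = Tt1 n + a * n + b * (t + 1) + c)
    (X : ℤ → ℝ)
    (hX : ∀ n : ℤ, X n = ⨅ l : Fin (g + 1),
        (((l : ℕ) : ℝ) * L + 2 * Tt1 (n - l - 1) + Tt n + Tt (n - 1)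
          - (2 * Tt1 (n - 1) + Tt (n - l) + Tt (n - l - 1))))
    (Tt2 : ℤ → ℝ) (hT2 : ∀ n : ℤ, Tt2 n = 2 * Tt1 n - Tt n + X (n + 1))
    (Qt Wt Qt1 Wt1 : ℤ → ℝ)
    (hQt : ∀ n : ℤ, Qt n = Tt (n - 1) + Tt1 n - Tt1 (n - 1) - Tt n + d)
    (hWt : ∀ n : ℤ, Wt n = L + Tt1 (n - 1) + Tt (n + 1) - Tt n - Tt1 n + d)
    (hQt1 : ∀ n : ℤ, Qt1 n = Tt1 (n - 1) + Tt2 n - Tt2 (n - 1) - Tt1 n + d)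
    (hWt1 : ∀ n : ℤ, Wt1 n = L + Tt2 (n - 1) + Tt1 (n + 1) - Tt1 n - Tt2 n + d) :
    (∀ n : ℤ, Tt2 (n + g + 1) = Tt2 n + a * n + b * (t + 2) + c) ∧
    (∑ n ∈ Finset.range (g + 1), Qt n < ∑ n ∈ Finset.range (g + 1), Wt n) ∧
    todaMap g (fun n : ZMod (g + 1) => Qt (n.val : ℤ), fun n : ZMod (g + 1) => Wt (n.val : ℤ))
      = (fun n : ZMod (g + 1) => Qt1 (n.val : ℤ), fun n : ZMod (g + 1) => Wt1 (n.val : ℤ)) := by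
  have hP : (0:ℝ) < ((g:ℝ)+1)*L + a - 2*b := by push_cast at hL; linarith
  set S : ℤ → ℕ → ℝ := bilinearSfun L Tt Tt1 with hSdef
  have hX' : ∀ n : ℤ, X n = ⨅ l : Fin (g + 1), S n (l : ℕ) := fun n => by rw [hX n]; rfl
  -- basic facts about S
  have hS0 : ∀ n : ℤ, S n 0 = 0 := by
    intro n; simp only [hSdef, bilinearSfun]; push_cast; ring_nf
  have hSsucc : ∀ n : ℤ, ∀ k : ℕ, S (n+1) (k+1) = (Wt n - Qt n) + S n k := by
    intro n k; simp only [hSdef, bilinearSfun]; push_cast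
    linear_combination (norm := (push_cast; ring_nf)) hQt n - hWt n
  have hStop : ∀ n : ℤ, S n (g+1) = ((g:ℝ)+1)*L + a - 2*b := by
    intro n; simp only [hSdef, bilinearSfun]; push_cast
    linear_combination (norm := (push_cast; ring_nf)) (-2)*hpt1 (n - g - 2) + hpt (n - g - 1) + hpt (n - g - 2)
  have hSper : ∀ n : ℤ, ∀ k : ℕ, S (n + ((g:ℤ)+1)) k = S n k := by
    intro n k; simp only [hSdef, bilinearSfun]; push_cast
    linear_combination (norm := (push_cast; ring_nf))
      2*hpt1 (n-k-1) + hpt n + hpt (n-1) - 2*hpt1 (n-1) - hpt (n-k) - hpt (n-k-1)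
  have hbdd : ∀ n : ℤ, BddBelow (Set.range fun l : Fin (g + 1) => S n (l : ℕ)) :=
    fun n => Set.Finite.bddBelow (Set.finite_range _)
  have hXle : ∀ n : ℤ, ∀ k : ℕ, k ≤ g → X n ≤ S n k := by
    intro n k hk
    rw [hX' n]
    exact ciInf_le (hbdd n) (⟨k, by omega⟩ : Fin (g+1))
  -- the recursion X (n+1) = min 0 (Wt n - Qt n + X n)
  have hrec : ∀ n : ℤ, X (n+1) = min 0 ((Wt n - Qt n) + X n) := by
    intro n
    have hX0 : X (n+1) ≤ 0 := by
      have := hXle (n+1) 0 (by omega); rwa [hS0] at this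
    apply le_antisymm
    · apply le_min hX0
      have hall : ∀ l : Fin (g+1), X (n+1) - (Wt n - Qt n) ≤ S n (l : ℕ) := by
        intro l
        by_cases hl : (l : ℕ) = g
        · have h1 : (Wt n - Qt n) + S n g = ((g:ℝ)+1)*L + a - 2*b := by
            rw [← hSsucc n g, hStop (n+1)]
          rw [hl]; linarith
        · have hk : (l : ℕ) + 1 ≤ g := by have := l.isLt; omega
          have := hXle (n+1) ((l:ℕ)+1) hk
          rw [hSsucc n (l:ℕ)] at this
          linarith
      rw [hX' n, ← sub_le_iff_le_add']
      exact le_ciInf hall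
    · rw [hX' (n+1)]
      apply le_ciInf
      intro l
      rcases Nat.eq_zero_or_pos (l : ℕ) with h0 | h0
      · rw [h0, hS0]; exact min_le_left _ _
      · obtain ⟨k, hk⟩ : ∃ k, (l : ℕ) = k + 1 := ⟨(l:ℕ)-1, by omega⟩
        rw [hk, hSsucc n k]
        have hXk : X n ≤ S n k := hXle n k (by have := l.isLt; omega)
        have := min_le_right (0:ℝ) ((Wt n - Qt n) + X n)
        linarith
  -- periodicity
  have hXper : ∀ n : ℤ, X (n + ((g:ℤ)+1)) = X n := by
    intro n; rw [hX' _, hX' n]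
    exact iInf_congr fun l => hSper n (l : ℕ)
  have hQper : ∀ n : ℤ, Qt (n + ((g:ℤ)+1)) = Qt n := by
    intro n
    linear_combination (norm := (push_cast; ring_nf))
      hQt (n + ((g:ℤ)+1)) - hQt n + hpt (n-1) + hpt1 n - hpt1 (n-1) - hpt n
  have hWper : ∀ n : ℤ, Wt (n + ((g:ℤ)+1)) = Wt n := by
    intro n
    linear_combination (norm := (push_cast; ring_nf))
      hWt (n + ((g:ℤ)+1)) - hWt n + hpt1 (n-1) + hpt (n+1) - hpt n - hpt1 n
  -- periodic functions factor through ZMod values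
  have hper_gen : ∀ (f : ℤ → ℝ), (∀ m, f (m + ((g:ℤ)+1)) = f m) →
      ∀ (k : ℤ), ∀ m : ℤ, f (m + ((g:ℤ)+1) * k) = f m := by
    intro f hf k
    induction k using Int.induction_on with
    | zero => intro m; simp
    | succ i ih =>
        intro m
        rw [show m + ((g:ℤ)+1)*((i:ℤ)+1) = (m + ((g:ℤ)+1)*(i:ℤ)) + ((g:ℤ)+1) by ring, hf, ih]
    | pred i ih =>
        intro m
        have h1 := hf (m + ((g:ℤ)+1)*(-(i:ℤ)-1))
        rw [show m + ((g:ℤ)+1)*(-(i:ℤ)-1) + ((g:ℤ)+1) = m + ((g:ℤ)+1)*(-(i:ℤ)) by ring] at h1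
        rw [← h1]; exact ih m
  have hzval : ∀ (f : ℤ → ℝ), (∀ m, f (m + ((g:ℤ)+1)) = f m) →
      ∀ (j : ℤ), f (((j : ZMod (g+1)).val : ℤ)) = f j := by
    intro f hf j
    have h2 : ((g:ℤ)+1) ∣ j - (((j : ZMod (g+1)).val : ℤ)) := by
      have h0 : ((j - (((j : ZMod (g+1)).val : ℤ)) : ℤ) : ZMod (g+1)) = 0 := by
        push_cast
        simp [ZMod.natCast_val, ZMod.cast_id]
      have := (ZMod.intCast_zmod_eq_zero_iff_dvd _ (g+1)).mp h0
      exact_mod_cast this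
    obtain ⟨k, hk⟩ := h2
    have hj : j = (((j : ZMod (g+1)).val : ℤ)) + ((g:ℤ)+1) * k := by linarith
    conv_rhs => rw [hj]
    exact (hper_gen f hf k _).symm
  have hval_eq : ∀ (f : ℤ → ℝ), (∀ m, f (m + ((g:ℤ)+1)) = f m) →
      ∀ (z : ZMod (g+1)) (j : ℤ), ((j : ZMod (g+1)) = z) → f ((z.val : ℤ)) = f j := by
    intro f hf z j hjz
    have := hzval f hf j
    rw [hjz] at this
    exact this
  -- the sums in todaX equal S
  have hsum : ∀ (n : ℤ) (k : ℕ),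
      ∑ l ∈ Finset.Icc 1 k, (Wt (n - l) - Qt (n - l)) = S n k := by
    intro n k
    induction k with
    | zero => simp [hS0 n]
    | succ k ih =>
        rw [Finset.sum_Icc_succ_top (by omega : 1 ≤ k+1), ih]
        simp only [hSdef, bilinearSfun]; push_cast
        linear_combination (norm := (push_cast; ring_nf)) hWt (n - (k+1)) - hQt (n - (k+1))
  -- todaX matches X
  have htX : ∀ nz : ZMod (g+1),
      TropToda.todaX g (fun z : ZMod (g+1) => Qt (z.val : ℤ))
        (fun z : ZMod (g+1) => Wt (z.val : ℤ)) nz = X ((nz.val : ℤ)) := by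
    intro nz
    rw [TropToda.todaX, hX' ((nz.val : ℤ))]
    refine iInf_congr fun k => ?_
    rw [← hsum ((nz.val : ℤ)) (k : ℕ)]
    refine Finset.sum_congr rfl fun l _ => ?_
    have hcast : ((((nz.val : ℤ) - (l:ℤ)) : ℤ) : ZMod (g+1)) = nz - (l : ZMod (g+1)) := by
      push_cast
      simp [ZMod.natCast_val, ZMod.cast_id]
    rw [hval_eq Wt hWper (nz - (l : ZMod (g+1))) ((nz.val : ℤ) - l) hcast,
        hval_eq Qt hQper (nz - (l : ZMod (g+1))) ((nz.val : ℤ) - l) hcast]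
  -- key pointwise identities
  have hQrec : ∀ m : ℤ, Qt1 m = Qt m - X m + X (m+1) := by
    intro m
    have h2 : Tt2 (m-1) = 2*Tt1 (m-1) - Tt (m-1) + X m := by
      have := hT2 (m-1); rwa [show m - 1 + 1 = m by ring] at this
    linear_combination (norm := ring_nf) hQt1 m - hQt m + hT2 m - h2
  have hsumQW : ∀ m : ℤ, Qt1 m + Wt1 m = Qt (m+1) + Wt m := by
    intro m
    linear_combination (norm := ring_nf) hQt1 m + hWt1 m - hQt (m+1) - hWt m
  have hmin : ∀ m : ℤ, min (Wt m) (Qt m - X m) = Qt1 m := by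
    intro m
    rw [hQrec m, hrec m, ← min_add_add_left (Qt m - X m) 0 ((Wt m - Qt m) + X m), min_comm]
    congr 1 <;> ring
  refine ⟨?_, ?_, ?_⟩
  · -- quasi-periodicity of Tt2
    intro n
    rw [hT2 (n + (g:ℤ) + 1), hT2 n]
    have hx2 : X (n + (g:ℤ) + 1 + 1) = X (n + 1) := by
      have := hXper (n + 1)
      rwa [show (n+1) + ((g:ℤ)+1) = n + (g:ℤ) + 1 + 1 by ring] at this
    rw [hx2, hpt1 n, hpt n]; ring
  · -- sum inequality
    have tele : ∀ (u : ℤ → ℝ),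
        ∑ n ∈ Finset.range (g+1), (u ((n:ℤ)+1) - u (n:ℤ)) = u ((g:ℤ)+1) - u 0 := by
      intro u
      have := Finset.sum_range_sub (fun j : ℕ => u (j:ℤ)) (g+1)
      push_cast at this ⊢
      exact this
    have hQsum : ∑ n ∈ Finset.range (g+1), Qt n
        = ((Tt1 ((g:ℤ)+1-1) - Tt ((g:ℤ)+1-1)) - (Tt1 ((0:ℤ)-1) - Tt ((0:ℤ)-1)))
          + ((g:ℝ)+1)*d := by
      have h1 : ∀ n ∈ Finset.range (g+1), Qt n =
          ((fun m : ℤ => Tt1 (m-1) - Tt (m-1)) ((n:ℤ)+1)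
            - (fun m : ℤ => Tt1 (m-1) - Tt (m-1)) (n:ℤ)) + d := by
        intro n _
        simp only
        linear_combination (norm := ring_nf) hQt (n:ℤ)
      rw [Finset.sum_congr rfl h1, Finset.sum_add_distrib,
        tele (fun m : ℤ => Tt1 (m-1) - Tt (m-1)), Finset.sum_const, Finset.card_range,
        nsmul_eq_mul]
      push_cast; ring
    have hWsum : ∑ n ∈ Finset.range (g+1), Wt n
        = ((Tt ((g:ℤ)+1) - Tt1 ((g:ℤ)+1-1)) - (Tt (0:ℤ) - Tt1 ((0:ℤ)-1)))
          + ((g:ℝ)+1)*(L+d) := by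
      have h1 : ∀ n ∈ Finset.range (g+1), Wt n =
          ((fun m : ℤ => Tt m - Tt1 (m-1)) ((n:ℤ)+1)
            - (fun m : ℤ => Tt m - Tt1 (m-1)) (n:ℤ)) + (L + d) := by
        intro n _
        simp only
        linear_combination (norm := ring_nf) hWt (n:ℤ)
      rw [Finset.sum_congr rfl h1, Finset.sum_add_distrib,
        tele (fun m : ℤ => Tt m - Tt1 (m-1)), Finset.sum_const, Finset.card_range,
        nsmul_eq_mul]
      push_cast; ring
    rw [hQsum, hWsum]
    have h1 := hpt (-1)
    have h2 := hpt1 (-1)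
    have h3 := hpt 0
    push_cast at hL
    ring_nf at h1 h2 h3 ⊢
    linarith
  · -- commutation with the Toda map
    rw [TropToda.todaMap]
    refine Prod.ext ?_ ?_
    · funext nz
      simp only
      rw [htX nz, hmin ((nz.val : ℤ))]
    · funext nz
      simp only
      rw [htX nz, hmin ((nz.val : ℤ))]
      have hcast : (((nz.val : ℤ) + 1 : ℤ) : ZMod (g+1)) = nz + 1 := by
        push_cast
        simp [ZMod.natCast_val, ZMod.cast_id]
      rw [hval_eq Qt hQper (nz + 1) ((nz.val : ℤ) + 1) hcast]
      linarith [hsumQW ((nz.val : ℤ))]
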